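/- Let (X,d) be a compact metric space, Q a stochastic kernel from X to a space Y, and T a stochastic kernel from X×U to X with ‖T(·|x,u) − T(·|x',u)‖_TV ≤ α·d(x,x') for all x,x',u. Define for probability measures z on X and u ∈ U the observation-prediction kernel P(B|z,u) = ∫∫ Q(B|x₁) T(dx₁|x₀,u) z(dx₀). Then for any two probability measures z, z' on X and any u: ‖P(·|z,u) − P(·|z',u)‖_TV ≤ α·W₁(z, z'). -/

import Mathlib

open MeasureTheory ProbabilityTheory

/-- Total variation distance in functional form. -/
noncomputable def tvDistF {X : Type*} [MeasurableSpace X] (μ ν : Measure X) : ℝ :=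
  ⨆ g : {g : X → ℝ // Measurable g ∧ ∀ x, |g x| ≤ 1},
    |∫ x, g.1 x ∂μ - ∫ x, g.1 x ∂ν|

/-- Wasserstein-1 distance. -/
noncomputable def wass1 {X : Type*} [MetricSpace X] [MeasurableSpace X] (μ ν : Measure X) : ℝ :=
  ⨆ f : {f : X → ℝ // LipschitzWith 1 f}, ((∫ x, f.1 x ∂μ) - ∫ x, f.1 x ∂ν)

/-- One-step observation prediction: `P(B|z,u) = ∫∫ Q(B|x₁) T(dx₁|x₀,u) z(dx₀)`. -/
noncomputable def obsPred {X Y U : Type*} [MeasurableSpace X] [MeasurableSpace Y]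
    (Q : Kernel X Y) (T : X → U → Measure X) (z : Measure X) (u : U) : Measure Y :=
  (z.bind (fun x₀ => T x₀ u)).bind (fun x₁ => Q x₁)


lemma integrable_of_abs_le {β : Type*} [MeasurableSpace β] (ν : Measure β) [IsFiniteMeasure ν]
    {g : β → ℝ} {C : ℝ} (hg : Measurable g) (hb : ∀ x, |g x| ≤ C) : Integrable g ν :=
  ⟨hg.aestronglyMeasurable,
    HasFiniteIntegral.of_bounded (C := C) (Filter.Eventually.of_forall fun x => by
      simpa using hb x)⟩

lemma isProbabilityMeasure_bind {α β : Type*} [MeasurableSpace α] [MeasurableSpace β]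
    (μ : Measure α) [IsProbabilityMeasure μ] (κ : α → Measure β) (hκ : Measurable κ)
    (hp : ∀ a, IsProbabilityMeasure (κ a)) : IsProbabilityMeasure (μ.bind κ) := by
  constructor
  rw [Measure.bind_apply MeasurableSet.univ hκ.aemeasurable]
  simp [fun a => (hp a).measure_univ]

lemma measurable_integral_bdd {α β : Type*} [MeasurableSpace α] [MeasurableSpace β]
    (κ : α → Measure β) (hκ : Measurable κ) (hp : ∀ a, IsProbabilityMeasure (κ a))
    {g : β → ℝ} (hg : Measurable g) (hb : ∀ x, |g x| ≤ 1) :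
    Measurable fun a => ∫ x, g x ∂(κ a) := by
  have heq : (fun a => ∫ x, g x ∂(κ a)) = fun a =>
      (∫⁻ x, ENNReal.ofReal (g x) ∂(κ a)).toReal -
      (∫⁻ x, ENNReal.ofReal (-g x) ∂(κ a)).toReal := by
    funext a
    have := hp a
    exact integral_eq_lintegral_pos_part_sub_lintegral_neg_part (integrable_of_abs_le _ hg hb)
  rw [heq]
  exact (((Measure.measurable_lintegral hg.ennreal_ofReal).comp hκ).ennreal_toReal).sub
    (((Measure.measurable_lintegral hg.neg.ennreal_ofReal).comp hκ).ennreal_toReal)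

lemma integral_bind_bdd {α β : Type*} [MeasurableSpace α] [MeasurableSpace β]
    (μ : Measure α) [IsProbabilityMeasure μ] (κ : α → Measure β) (hκ : Measurable κ)
    (hp : ∀ a, IsProbabilityMeasure (κ a)) {g : β → ℝ} (hg : Measurable g)
    (hb : ∀ x, |g x| ≤ 1) :
    ∫ x, g x ∂(μ.bind κ) = ∫ a, ∫ x, g x ∂(κ a) ∂μ := by
  have hbind := isProbabilityMeasure_bind μ κ hκ hp
  have hgp : Measurable fun x => ENNReal.ofReal (g x) := hg.ennreal_ofReal
  have hgn : Measurable fun x => ENNReal.ofReal (-g x) := hg.neg.ennreal_ofReal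
  have hple : ∀ (ν : Measure β), IsProbabilityMeasure ν → ∫⁻ x, ENNReal.ofReal (g x) ∂ν ≤ 1 := by
    intro ν hν
    calc ∫⁻ x, ENNReal.ofReal (g x) ∂ν ≤ ∫⁻ _, 1 ∂ν := by
          refine lintegral_mono fun x => ?_
          refine ENNReal.ofReal_le_of_le_toReal ?_
          simpa using (abs_le.1 (hb x)).2
      _ = 1 := by simp
  have hnle : ∀ (ν : Measure β), IsProbabilityMeasure ν → ∫⁻ x, ENNReal.ofReal (-g x) ∂ν ≤ 1 := by
    intro ν hν
    calc ∫⁻ x, ENNReal.ofReal (-g x) ∂ν ≤ ∫⁻ _, 1 ∂ν := by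
          refine lintegral_mono fun x => ?_
          refine ENNReal.ofReal_le_of_le_toReal ?_
          exact le_trans (le_abs_self _) (by rw [abs_neg]; exact hb x)
      _ = 1 := by simp
  rw [integral_eq_lintegral_pos_part_sub_lintegral_neg_part (integrable_of_abs_le _ hg hb),
    Measure.lintegral_bind hκ.aemeasurable hgp.aemeasurable,
    Measure.lintegral_bind hκ.aemeasurable hgn.aemeasurable]
  have heq : (fun a => ∫ x, g x ∂(κ a)) = fun a =>
      (∫⁻ x, ENNReal.ofReal (g x) ∂(κ a)).toReal -
      (∫⁻ x, ENNReal.ofReal (-g x) ∂(κ a)).toReal := by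
    funext a
    have := hp a
    exact integral_eq_lintegral_pos_part_sub_lintegral_neg_part (integrable_of_abs_le _ hg hb)
  rw [heq]
  have hmp : Measurable fun a => (∫⁻ x, ENNReal.ofReal (g x) ∂(κ a)).toReal :=
    ((Measure.measurable_lintegral hgp).comp hκ).ennreal_toReal
  have hmn : Measurable fun a => (∫⁻ x, ENNReal.ofReal (-g x) ∂(κ a)).toReal :=
    ((Measure.measurable_lintegral hgn).comp hκ).ennreal_toReal
  have hip : Integrable (fun a => (∫⁻ x, ENNReal.ofReal (g x) ∂(κ a)).toReal) μ := by
    refine integrable_of_abs_le _ hmp (C := 1) fun a => ?_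
    rw [abs_of_nonneg ENNReal.toReal_nonneg]
    exact ENNReal.toReal_le_of_le_ofReal one_pos.le (by simpa using hple _ (hp a))
  have hin : Integrable (fun a => (∫⁻ x, ENNReal.ofReal (-g x) ∂(κ a)).toReal) μ := by
    refine integrable_of_abs_le _ hmn (C := 1) fun a => ?_
    rw [abs_of_nonneg ENNReal.toReal_nonneg]
    exact ENNReal.toReal_le_of_le_ofReal one_pos.le (by simpa using hnle _ (hp a))
  have hmp' : Measurable fun a => ∫⁻ x, ENNReal.ofReal (g x) ∂(κ a) :=
    (Measure.measurable_lintegral hgp).comp hκ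
  have hmn' : Measurable fun a => ∫⁻ x, ENNReal.ofReal (-g x) ∂(κ a) :=
    (Measure.measurable_lintegral hgn).comp hκ
  rw [integral_sub hip hin,
    integral_toReal hmp'.aemeasurable
      (Filter.Eventually.of_forall fun a => lt_of_le_of_lt (hple _ (hp a)) (by norm_num)),
    integral_toReal hmn'.aemeasurable
      (Filter.Eventually.of_forall fun a => lt_of_le_of_lt (hnle _ (hp a)) (by norm_num))]

/-- If `‖T(·|x,u) − T(·|x',u)‖_TV ≤ α·d(x,x')`, then for any two beliefs `z, z'` and
any `u`: `‖P(·|z,u) − P(·|z',u)‖_TV ≤ α·W₁(z, z')`. -/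
theorem tv_obsPred_le_wass {X Y U : Type*} [MetricSpace X] [CompactSpace X]
    [MeasurableSpace X] [BorelSpace X] [MeasurableSpace Y]
    (Q : Kernel X Y) [IsMarkovKernel Q]
    (T : X → U → Measure X) (hT : ∀ x u, IsProbabilityMeasure (T x u))
    (hTmeas : ∀ u : U, Measurable (fun x => T x u))
    (α : ℝ) (hα : 0 ≤ α)
    (hTLip : ∀ (x x' : X) (u : U), tvDistF (T x u) (T x' u) ≤ α * dist x x')
    (z z' : Measure X) [IsProbabilityMeasure z] [IsProbabilityMeasure z'] (u : U) :
    tvDistF (obsPred Q T z u) (obsPred Q T z' u) ≤ α * wass1 z z' := by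
  classical
  have hX : Nonempty X := by
    by_contra hc
    rw [not_nonempty_iff] at hc
    have h0 : z Set.univ = 1 := measure_univ
    rw [Set.univ_eq_empty_iff.2 hc, measure_empty] at h0
    exact zero_ne_one h0
  obtain ⟨x₀⟩ := hX
  set D := Metric.diam (Set.univ : Set X) with hD
  -- the wass1 supremum is over a bounded-above set
  have hbddW : BddAbove (Set.range fun f : {f : X → ℝ // LipschitzWith 1 f} =>
      (∫ x, f.1 x ∂z) - ∫ x, f.1 x ∂z') := by
    refine ⟨2 * D, ?_⟩
    rintro r ⟨f, rfl⟩
    show (∫ x, f.1 x ∂z) - ∫ x, f.1 x ∂z' ≤ 2 * D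
    have hfc : ∀ x, |f.1 x - f.1 x₀| ≤ D := by
      intro x
      have h1 : dist (f.1 x) (f.1 x₀) ≤ 1 * dist x x₀ := f.2.dist_le_mul x x₀
      have h2 : dist x x₀ ≤ D := Metric.dist_le_diam_of_mem
        isCompact_univ.isBounded (Set.mem_univ _) (Set.mem_univ _)
      calc |f.1 x - f.1 x₀| = dist (f.1 x) (f.1 x₀) := (Real.dist_eq _ _).symm
        _ ≤ 1 * dist x x₀ := h1
        _ = dist x x₀ := one_mul _
        _ ≤ D := h2
    have hmeas : Measurable f.1 := f.2.continuous.measurable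
    have hint : ∀ (μ : Measure X), IsProbabilityMeasure μ → Integrable f.1 μ := by
      intro μ hμ
      refine integrable_of_abs_le μ hmeas (C := |f.1 x₀| + D) fun x => ?_
      calc |f.1 x| = |f.1 x₀ + (f.1 x - f.1 x₀)| := by ring_nf
        _ ≤ |f.1 x₀| + |f.1 x - f.1 x₀| := abs_add_le _ _
        _ ≤ |f.1 x₀| + D := by linarith [hfc x]
    have e : ∀ (μ : Measure X), IsProbabilityMeasure μ →
        ∫ x, f.1 x ∂μ = (∫ x, (f.1 x - f.1 x₀) ∂μ) + f.1 x₀ := by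
      intro μ hμ
      rw [integral_sub (hint μ hμ) (integrable_const _), integral_const]
      simp
    have b : ∀ (μ : Measure X), IsProbabilityMeasure μ →
        |∫ x, (f.1 x - f.1 x₀) ∂μ| ≤ D := by
      intro μ hμ
      have := norm_integral_le_of_norm_le_const (μ := μ) (f := fun x => f.1 x - f.1 x₀)
        (C := D) (Filter.Eventually.of_forall fun x => by simpa using hfc x)
      simpa using this
    rw [e z ‹_›, e z' ‹_›]
    have hb1 := abs_le.1 (b z ‹_›)
    have hb2 := abs_le.1 (b z' ‹_›)
    linarith [hb1.1, hb1.2, hb2.1, hb2.2]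
  have hNE : Nonempty {g : Y → ℝ // Measurable g ∧ ∀ x, |g x| ≤ 1} :=
    ⟨⟨0, measurable_const, by simp⟩⟩
  unfold tvDistF
  refine ciSup_le fun g => ?_
  -- define the pushed-forward test functions
  set gQ : X → ℝ := fun x₁ => ∫ y, g.1 y ∂(Q x₁) with hgQdef
  have hgQm : Measurable gQ :=
    measurable_integral_bdd (fun x => Q x) Q.measurable (fun x => inferInstance) g.2.1 g.2.2
  have hgQb : ∀ x, |gQ x| ≤ 1 := by
    intro x
    have := norm_integral_le_of_norm_le_const (μ := Q x) (f := g.1) (C := 1)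
      (Filter.Eventually.of_forall fun y => by simpa using g.2.2 y)
    simpa [hgQdef] using this
  set h : X → ℝ := fun x₂ => ∫ x₁, gQ x₁ ∂(T x₂ u) with hhdef
  have hhm : Measurable h :=
    measurable_integral_bdd _ (hTmeas u) (fun x => hT x u) hgQm hgQb
  -- the integral against obsPred equals the integral of h
  have hPz : ∀ (μ : Measure X), IsProbabilityMeasure μ →
      ∫ y, g.1 y ∂(obsPred Q T μ u) = ∫ x₂, h x₂ ∂μ := by
    intro μ hμ
    have hbind := isProbabilityMeasure_bind μ (fun x₂ => T x₂ u) (hTmeas u) (fun x => hT x u)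
    unfold obsPred
    rw [integral_bind_bdd _ (fun x₁ => Q x₁) Q.measurable (fun _ => inferInstance) g.2.1 g.2.2]
    exact integral_bind_bdd μ _ (hTmeas u) (fun x => hT x u) hgQm hgQb
  rw [hPz z ‹_›, hPz z' ‹_›]
  -- h is α-Lipschitz via the TV assumption
  have hhtv : ∀ x x', |h x - h x'| ≤ α * dist x x' := by
    intro x x'
    refine le_trans ?_ (hTLip x x' u)
    unfold tvDistF
    have hbdd2 : BddAbove (Set.range fun g' : {g : X → ℝ // Measurable g ∧ ∀ x, |g x| ≤ 1} =>
        |∫ x₁, g'.1 x₁ ∂(T x u) - ∫ x₁, g'.1 x₁ ∂(T x' u)|) := by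
      refine ⟨2, ?_⟩
      rintro r ⟨g', rfl⟩
      have := hT x u
      have := hT x' u
      have h1 : |∫ x₁, g'.1 x₁ ∂(T x u)| ≤ 1 := by
        have := norm_integral_le_of_norm_le_const (μ := T x u) (f := g'.1) (C := 1)
          (Filter.Eventually.of_forall fun y => by simpa using g'.2.2 y)
        simpa using this
      have h2 : |∫ x₁, g'.1 x₁ ∂(T x' u)| ≤ 1 := by
        have := norm_integral_le_of_norm_le_const (μ := T x' u) (f := g'.1) (C := 1)
          (Filter.Eventually.of_forall fun y => by simpa using g'.2.2 y)
        simpa using this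
      calc |∫ x₁, g'.1 x₁ ∂(T x u) - ∫ x₁, g'.1 x₁ ∂(T x' u)| ≤
          |∫ x₁, g'.1 x₁ ∂(T x u)| + |∫ x₁, g'.1 x₁ ∂(T x' u)| := abs_sub _ _
        _ ≤ 2 := by linarith
    exact le_ciSup hbdd2 ⟨gQ, hgQm, hgQb⟩
  rcases hα.eq_or_lt with hα0 | hαpos
  · -- α = 0 : h is constant
    have hconst : ∀ x, h x = h x₀ := by
      intro x
      have h1 := hhtv x x₀
      rw [← hα0, zero_mul] at h1
      have h2 := abs_nonneg (h x - h x₀)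
      have : |h x - h x₀| = 0 := le_antisymm h1 h2
      have := abs_eq_zero.1 this
      linarith
    have hrw : h = fun _ => h x₀ := funext hconst
    rw [hrw]
    simp [← hα0]
  · -- α > 0 : h / α is 1-Lipschitz
    set f : X → ℝ := fun x => α⁻¹ * h x with hfdef
    have hfLip : LipschitzWith 1 f := by
      refine LipschitzWith.of_dist_le_mul fun x y => ?_
      rw [Real.dist_eq, NNReal.coe_one, one_mul]
      show |α⁻¹ * h x - α⁻¹ * h y| ≤ dist x y
      rw [← mul_sub, abs_mul, abs_of_nonneg (inv_nonneg.2 hα)]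
      calc α⁻¹ * |h x - h y| ≤ α⁻¹ * (α * dist x y) :=
            mul_le_mul_of_nonneg_left (hhtv x y) (inv_nonneg.2 hα)
        _ = dist x y := by field_simp
    have hnegLip : LipschitzWith 1 (fun x => -f x) := by
      refine LipschitzWith.of_dist_le_mul fun x y => ?_
      rw [Real.dist_eq, NNReal.coe_one, one_mul]
      have := hfLip.dist_le_mul x y
      rw [Real.dist_eq, NNReal.coe_one, one_mul] at this
      calc |(-f x) - (-f y)| = |f y - f x| := by ring_nf
        _ = |f x - f y| := (abs_sub_comm _ _)
        _ ≤ dist x y := this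
    have h1 : (∫ x, f x ∂z) - ∫ x, f x ∂z' ≤ wass1 z z' :=
      le_ciSup hbddW ⟨f, hfLip⟩
    have h2 : (∫ x, -f x ∂z) - ∫ x, -f x ∂z' ≤ wass1 z z' :=
      le_ciSup hbddW ⟨fun x => -f x, hnegLip⟩
    rw [integral_neg, integral_neg] at h2
    have hiz : ∫ x, f x ∂z = α⁻¹ * ∫ x, h x ∂z := by
      rw [hfdef]; exact integral_const_mul α⁻¹ h
    have hiz' : ∫ x, f x ∂z' = α⁻¹ * ∫ x, h x ∂z' := by
      rw [hfdef]; exact integral_const_mul α⁻¹ h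
    rw [hiz, hiz'] at h1 h2
    rw [abs_sub_le_iff]
    constructor
    · have := mul_le_mul_of_nonneg_left h1 hα
      rw [mul_sub, ← mul_assoc, ← mul_assoc, mul_inv_cancel₀ hαpos.ne', one_mul, one_mul] at this
      linarith [this]
    · have h2' : α⁻¹ * ∫ x, h x ∂z' - α⁻¹ * ∫ x, h x ∂z ≤ wass1 z z' := by linarith
      have := mul_le_mul_of_nonneg_left h2' hα
      rw [mul_sub, ← mul_assoc, ← mul_assoc, mul_inv_cancel₀ hαpos.ne', one_mul, one_mul] at this
      linarith [this]
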